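/- For every prime p, the Liouville function changes sign infinitely often on n² + p; that is, there are infinitely many positive integers n with λ(n² + p) = 1, and infinitely many positive integers n with λ(n² + p) = −1. -/

import Mathlib

/-- The Liouville function: `λ(n) = (-1)^Ω(n)` where `Ω(n)` counts prime factors
of `n` with multiplicity. -/
def liouvilleFun (n : ℕ) : ℤ := (-1) ^ n.primeFactorsList.length

lemma liouvilleFun_mul {a b : ℕ} (ha : a ≠ 0) (hb : b ≠ 0) :
    liouvilleFun (a * b) = liouvilleFun a * liouvilleFun b := by
  unfold liouvilleFun
  rw [(Nat.perm_primeFactorsList_mul ha hb).length_eq, List.length_append, pow_add]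

lemma liouvilleFun_sq (k : ℕ) (hk : k ≠ 0) : liouvilleFun (k * k) = 1 := by
  rw [liouvilleFun_mul hk hk]
  unfold liouvilleFun
  rw [← pow_add, neg_one_pow_eq_one_iff_even (by norm_num : (-1 : ℤ) ≠ 1)]
  exact ⟨_, rfl⟩

lemma liouvilleFun_prime {p : ℕ} (hp : p.Prime) : liouvilleFun p = -1 := by
  unfold liouvilleFun
  rw [Nat.primeFactorsList_prime hp]
  rfl

lemma liouvilleFun_eq_one_or_neg_one (n : ℕ) :
    liouvilleFun n = 1 ∨ liouvilleFun n = -1 := by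
  unfold liouvilleFun
  rcases Nat.even_or_odd n.primeFactorsList.length with h | h
  · exact Or.inl (Even.neg_one_pow h)
  · exact Or.inr (Odd.neg_one_pow h)

lemma pell_unbounded {p : ℕ} (hp : p.Prime) :
    ∀ B : ℕ, ∃ a b : ℕ, B < b ∧ a * a = p * (b * b) + 1 := by
  -- one nontrivial solution
  obtain ⟨x, y, hxy, hy⟩ := Pell.exists_of_not_isSquare
    (by exact_mod_cast hp.pos : (0 : ℤ) < (p : ℤ))
    (by
      rintro ⟨r, hr⟩
      have : p = r.natAbs * r.natAbs := by
        have h1 := congrArg Int.natAbs hr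
        simpa [Int.natAbs_mul] using h1
      exact hp.prime.not_isSquare ⟨r.natAbs, this⟩)
  have hsol : ∃ a b : ℕ, 0 < b ∧ a * a = p * (b * b) + 1 := by
    refine ⟨x.natAbs, y.natAbs, Int.natAbs_pos.mpr hy, ?_⟩
    have hx2 : (x.natAbs : ℤ) * (x.natAbs : ℤ) = x * x := Int.natAbs_mul_self' _
    have hy2 : (y.natAbs : ℤ) * (y.natAbs : ℤ) = y * y := Int.natAbs_mul_self' _

    have : (x.natAbs : ℤ) * (x.natAbs : ℤ) = (p : ℤ) * ((y.natAbs : ℤ) * (y.natAbs : ℤ)) + 1 := by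
      rw [hx2, hy2]; nlinarith [hxy]
    exact_mod_cast this
  intro B
  induction B with
  | zero => obtain ⟨a, b, hb, h⟩ := hsol; exact ⟨a, b, hb, h⟩
  | succ B ih =>
      obtain ⟨a, b, hb', h⟩ := ih; have hb := hb'
      have ha : 0 < a := by
        rcases Nat.eq_zero_or_pos a with h0 | h0
        · simp [h0] at h
        · exact h0
      refine ⟨a * a + p * (b * b), 2 * a * b, ?_, ?_⟩
      · nlinarith
      · nlinarith
lemma liouvilleFun_sq_add_prime_neg_one {p : ℕ} (hp : p.Prime) {a b : ℕ}
    (hb : 0 < b) (h : a * a = p * (b * b) + 1) :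
    liouvilleFun ((p * b) ^ 2 + p) = -1 := by
  have ha : a ≠ 0 := by
    rcases Nat.eq_zero_or_pos a with h0 | h0
    · simp [h0] at h
    · exact h0.ne'
  have key : (p * b) ^ 2 + p = p * (a * a) := by
    rw [h]; ring
  rw [key, liouvilleFun_mul hp.ne_zero (by positivity), liouvilleFun_prime hp,
    liouvilleFun_sq a ha]
  ring

theorem liouville_sign_changes_sq_add_prime (p : ℕ) (hp : p.Prime) :
    {n : ℕ | 0 < n ∧ liouvilleFun (n ^ 2 + p) = 1}.Infinite ∧
    {n : ℕ | 0 < n ∧ liouvilleFun (n ^ 2 + p) = -1}.Infinite := by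
  constructor
  · -- +1 side: if eventually -1, contradiction via the identity
    by_contra hfin
    rw [Set.not_infinite] at hfin
    obtain ⟨N, hN⟩ := hfin.bddAbove
    have hneg : ∀ m : ℕ, N < m → liouvilleFun (m ^ 2 + p) = -1 := by
      intro m hm
      rcases liouvilleFun_eq_one_or_neg_one (m ^ 2 + p) with h1 | h1
      · have hmem : m ∈ {n : ℕ | 0 < n ∧ liouvilleFun (n ^ 2 + p) = 1} :=
          ⟨Nat.zero_lt_of_lt hm, h1⟩
        exact absurd (hN hmem) (Nat.not_le.mpr hm)
      · exact h1
    set n := N + 1 with hn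
    have hident : (n ^ 2 + n + p) ^ 2 + p = (n ^ 2 + p) * ((n + 1) ^ 2 + p) := by ring
    have h1 : liouvilleFun ((n ^ 2 + n + p) ^ 2 + p) = 1 := by
      rw [hident, liouvilleFun_mul (by positivity) (by positivity),
        hneg n (Nat.lt_succ_self N), hneg (n + 1) (by omega)]
      ring
    have h2 : liouvilleFun ((n ^ 2 + n + p) ^ 2 + p) = -1 := by
      apply hneg
      have : n ≤ n ^ 2 + n + p := by nlinarith
      omega
    rw [h1] at h2
    norm_num at h2
  · -- -1 side: Pell solutions
    apply Set.infinite_of_forall_exists_gt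
    intro M
    obtain ⟨a, b, hb, h⟩ := pell_unbounded hp M
    refine ⟨p * b, ⟨?_, liouvilleFun_sq_add_prime_neg_one hp (by omega) h⟩, ?_⟩
    · exact Nat.mul_pos hp.pos (by omega)
    · calc M < b := hb
        _ ≤ p * b := Nat.le_mul_of_pos_left b hp.pos
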